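/- Let h be a natural number and let P = P₀ \ ⋃_{i=1}^h interior(Pᵢ), where P₀ is a convex polygon in ℝ² and each hole Pᵢ is a closed axis-aligned rectangle [aᵢ, bᵢ] × [cᵢ, dᵢ] with nonempty interior, the rectangles being pairwise disjoint and contained in the interior of P₀. Then for every point s ∈ P there exists a continuous path γ : [0,1] → ℝ² with γ(0) = s, γ(1) ∈ frontier(P₀), image of γ contained in P, and length at most diam₂(P). -/

import Mathlib

open Set Metric ENNReal RealInnerProductSpace

noncomputable section

/-- The Euclidean plane. -/
abbrev Plane := EuclideanSpace ℝ (Fin 2)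

/-- A convex polygon: the convex hull of a nonempty finite point set. -/
def IsConvexPolygon (Q : Set Plane) : Prop :=
  ∃ S : Finset Plane, S.Nonempty ∧ Q = convexHull ℝ (S : Set Plane)

/-- `γ` is a continuous path from `s` to `t` (parametrized on `[0,1]`) with image in `P`. -/
def IsPathIn (P : Set Plane) (γ : ℝ → Plane) (s t : Plane) : Prop :=
  ContinuousOn γ (Set.Icc 0 1) ∧ γ 0 = s ∧ γ 1 = t ∧ Set.MapsTo γ (Set.Icc 0 1) P

/-- Length of a path: its total variation on `[0,1]`. -/
def pathLen (γ : ℝ → Plane) : ℝ≥0∞ := eVariationOn γ (Set.Icc 0 1)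

/-- Geodesic distance inside `P`: infimum of lengths of continuous paths
from `s` to `t` contained in `P`. -/
def geod (P : Set Plane) (s t : Plane) : ℝ≥0∞ :=
  ⨅ γ : {γ : ℝ → Plane // IsPathIn P γ s t}, pathLen γ.1

/-- Geodesic diameter of `P`. -/
def geodDiam (P : Set Plane) : ℝ≥0∞ :=
  ⨆ s ∈ P, ⨆ t ∈ P, geod P s t

/-- The width of a planar set: the minimum, over unit directions `v`,
of the extent of `C` in direction `v`. -/
def setWidth (C : Set Plane) : ℝ :=
  ⨅ v : {v : Plane // ‖v‖ = 1},
    (sSup ((fun x => ⟪x, v.1⟫) '' C) - sInf ((fun x => ⟪x, v.1⟫) '' C))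


/-! ### Auxiliary definitions and lemmas -/

/-- Constructor for points of the plane. -/
def pt (x y : ℝ) : Plane := (EuclideanSpace.equiv (Fin 2) ℝ).symm ![x, y]
@[simp] lemma pt_zero (x y : ℝ) : pt x y 0 = x := rfl
@[simp] lemma pt_one (x y : ℝ) : pt x y 1 = y := rfl
lemma pt_eta (p : Plane) : pt (p 0) (p 1) = p := by ext i; fin_cases i <;> rfl

lemma continuous_coord (i : Fin 2) : Continuous (fun p : Plane => p i) :=
  (EuclideanSpace.proj i : Plane →L[ℝ] ℝ).continuous

lemma continuous_pt_snd (x : ℝ) : Continuous (fun t => pt x t) := by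
  unfold pt
  exact (EuclideanSpace.equiv (Fin 2) ℝ).symm.continuous.comp (by
    apply continuous_pi; intro i; fin_cases i <;> simp [continuous_const, continuous_id'])

lemma dist_pt (x y x' y' : ℝ) : dist (pt x y) (pt x' y') = Real.sqrt ((x-x')^2 + (y-y')^2) := by
  rw [EuclideanSpace.dist_eq]
  congr 1
  rw [Fin.sum_univ_two]
  simp [Real.dist_eq, sq_abs]

lemma dist_pt_vert (x y y' : ℝ) : dist (pt x y) (pt x y') = |y - y'| := by
  rw [dist_pt]; rw [sub_self]; norm_num [Real.sqrt_sq_eq_abs]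

lemma dist_pt_horiz (x x' y : ℝ) : dist (pt x y) (pt x' y) = |x - x'| := by
  rw [dist_pt]; rw [sub_self]; norm_num [Real.sqrt_sq_eq_abs]

lemma abs_snd_le_norm (x t : ℝ) : |t| ≤ ‖pt x t‖ := by
  have h0 : (0 : Plane) = pt 0 0 := by ext i; fin_cases i <;> rfl
  rw [show ‖pt x t‖ = dist (pt x t) 0 from (dist_zero_right _).symm, h0, dist_pt]
  rw [← Real.sqrt_sq_eq_abs]
  apply Real.sqrt_le_sqrt
  nlinarith [sq_nonneg (x - 0)]

/-- Linear segment path. -/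
def seg (p q : Plane) : ℝ → Plane := fun t => p + t • (q - p)

lemma seg_apply (p q : Plane) (t : ℝ) :
    seg p q t = pt (p 0 + t * (q 0 - p 0)) (p 1 + t * (q 1 - p 1)) := by
  ext i; fin_cases i <;>
    simp [seg, PiLp.add_apply, PiLp.smul_apply, PiLp.sub_apply]

lemma seg_isPathIn {P : Set Plane} {p q : Plane} (hm : Set.MapsTo (seg p q) (Set.Icc 0 1) P) :
    IsPathIn P (seg p q) p q :=
  ⟨(Continuous.continuousOn (by unfold seg; fun_prop)), by simp [seg], by simp [seg], hm⟩

lemma pathLen_seg (p q : Plane) : pathLen (seg p q) ≤ ENNReal.ofReal (dist p q) := by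
  have lip : LipschitzWith ‖q - p‖₊ (fun s : ℝ => p + s • (q - p)) := by
    apply LipschitzWith.of_dist_le_mul
    intro s t
    have : (p + s • (q - p)) - (p + t • (q - p)) = (s - t) • (q - p) := by module
    rw [dist_eq_norm, this, norm_smul]
    simp [Real.dist_eq, abs_sub_comm s t, mul_comm]
  have h1 : eVariationOn (fun s : ℝ => s) (Icc (0:ℝ) 1) ≤ ENNReal.ofReal ((1:ℝ) - 0) := by
    have := MonotoneOn.eVariationOn_le (f := fun s : ℝ => s) (s := Icc (0:ℝ) 1)
      (fun x _ y _ h => h) (Set.left_mem_Icc.2 zero_le_one) (Set.right_mem_Icc.2 zero_le_one)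
    simpa using this
  have h2 := lip.lipschitzOnWith (s := univ) |>.comp_eVariationOn_le
      (g := fun s : ℝ => s) (s := Icc (0:ℝ) 1) (mapsTo_univ _ _)
  have key : pathLen (seg p q) ≤ ‖q - p‖₊ * ENNReal.ofReal ((1:ℝ) - 0) := by
    refine le_trans (le_of_eq ?_) (h2.trans (mul_le_mul_right h1 _))
    rfl
  calc pathLen (seg p q) ≤ ‖q - p‖₊ * ENNReal.ofReal ((1:ℝ) - 0) := key
    _ = ENNReal.ofReal (dist p q) := by
        rw [dist_eq_norm, norm_sub_rev, ← coe_nnnorm, ENNReal.ofReal_coe_nnreal]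
        norm_num

/-- Clamp to `[0,1]`. -/
def clamp (t : ℝ) : ℝ := max 0 (min 1 t)

lemma clamp_mem (t : ℝ) : clamp t ∈ Icc (0:ℝ) 1 :=
  ⟨le_max_left _ _, max_le (by norm_num) (min_le_left _ _)⟩

lemma clamp_of_mem {t : ℝ} (ht : t ∈ Icc (0:ℝ) 1) : clamp t = t := by
  unfold clamp
  rw [min_eq_right ht.2, max_eq_right ht.1]

lemma continuous_clamp : Continuous clamp := by unfold clamp; fun_prop

lemma path_join {P : Set Plane} {γ₁ γ₂ : ℝ → Plane} {p q r : Plane}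
    (h₁ : IsPathIn P γ₁ p q) (h₂ : IsPathIn P γ₂ q r) :
    ∃ γ, IsPathIn P γ p r ∧ pathLen γ ≤ pathLen γ₁ + pathLen γ₂ := by
  obtain ⟨c₁, e₁0, e₁1, m₁⟩ := h₁
  obtain ⟨c₂, e₂0, e₂1, m₂⟩ := h₂
  set g₁ : ℝ → Plane := fun t => γ₁ (clamp t) with hg₁
  set g₂ : ℝ → Plane := fun t => γ₂ (clamp t) with hg₂
  have cg₁ : Continuous g₁ := c₁.comp_continuous continuous_clamp clamp_mem
  have cg₂ : Continuous g₂ := c₂.comp_continuous continuous_clamp clamp_mem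
  have eq₁ : EqOn g₁ γ₁ (Icc 0 1) := fun t ht => by simp [hg₁, clamp_of_mem ht]
  have eq₂ : EqOn g₂ γ₂ (Icc 0 1) := fun t ht => by simp [hg₂, clamp_of_mem ht]
  set γ : ℝ → Plane := fun t => if t ≤ 1/2 then g₁ (2*t) else g₂ (2*t - 1) with hγ
  have key : g₁ 1 = g₂ 0 := by
    rw [eq₁ (by norm_num), eq₂ (by norm_num), e₁1, e₂0]
  have cγ : Continuous γ := by
    apply Continuous.if_le (by fun_prop) (by fun_prop) continuous_id continuous_const
    intro t ht
    simp only [id] at ht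
    rw [ht]; norm_num [key]
  refine ⟨γ, ⟨cγ.continuousOn, ?_, ?_, ?_⟩, ?_⟩
  · simp only [hγ]
    rw [if_pos (by norm_num)]
    simpa [hg₁, clamp_of_mem (show (0:ℝ) ∈ Icc (0:ℝ) 1 by norm_num)] using e₁0
  · simp only [hγ]
    rw [if_neg (by norm_num)]
    norm_num
    rw [eq₂ (by norm_num)]; exact e₂1
  · intro t ht
    simp only [hγ]
    split_ifs with h
    · rw [hg₁]; exact m₁ (clamp_mem _)
    · rw [hg₂]; exact m₂ (clamp_mem _)
  · have split := eVariationOn.Icc_add_Icc (s := univ) γ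
      (by norm_num : (0:ℝ) ≤ 1/2) (by norm_num : (1:ℝ)/2 ≤ 1) (mem_univ _)
    simp only [univ_inter] at split
    have part1 : eVariationOn γ (Icc 0 (1/2)) = eVariationOn γ₁ (Icc 0 1) := by
      have e : EqOn γ (g₁ ∘ (fun t => 2*t)) (Icc 0 (1/2)) := by
        intro t ht
        simp only [hγ, Function.comp]
        rw [if_pos ht.2]
      rw [eVariationOn.eq_of_eqOn e,
        eVariationOn.comp_eq_of_monotoneOn _ _
          (fun x _ y _ h => by dsimp only; linarith : MonotoneOn (fun t : ℝ => 2*t) (Icc 0 (1/2)))]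
      have him : (fun t : ℝ => 2*t) '' Icc 0 (1/2) = Icc (0:ℝ) 1 := by
        rw [image_mul_left_Icc (by norm_num) (by norm_num)]; norm_num
      rw [him, eVariationOn.eq_of_eqOn eq₁]
    have part2 : eVariationOn γ (Icc (1/2) 1) = eVariationOn γ₂ (Icc 0 1) := by
      have e : EqOn γ (g₂ ∘ (fun t => 2*t - 1)) (Icc (1/2) 1) := by
        intro t ht
        simp only [hγ, Function.comp]
        split_ifs with h
        · have : t = 1/2 := le_antisymm h ht.1
          subst this
          norm_num [key]
        · rfl
      rw [eVariationOn.eq_of_eqOn e,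
        eVariationOn.comp_eq_of_monotoneOn _ _
          (fun x _ y _ h => by dsimp only; linarith :
            MonotoneOn (fun t : ℝ => 2*t - 1) (Icc (1/2) 1))]
      have him : (fun t : ℝ => 2*t - 1) '' Icc (1/2) 1 = Icc (0:ℝ) 1 := by
        have : (fun t : ℝ => 2*t - 1) = (fun x : ℝ => x - 1) ∘ (fun t : ℝ => 2*t) := rfl
        rw [this, image_comp,
          image_mul_left_Icc (by norm_num : (0:ℝ) ≤ 2) (by norm_num : (1:ℝ)/2 ≤ 1),
          image_sub_const_Icc]
        norm_num
      rw [him, eVariationOn.eq_of_eqOn eq₂]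
    unfold pathLen
    rw [← split, part1, part2]

/-- Axis-aligned rectangle. -/
def Rect (A B C D : ℝ) : Set Plane := {p : Plane | p 0 ∈ Icc A B ∧ p 1 ∈ Icc C D}

lemma interior_Rect (A B C D : ℝ) :
    interior (Rect A B C D) = {p : Plane | p 0 ∈ Ioo A B ∧ p 1 ∈ Ioo C D} := by
  apply Subset.antisymm
  · intro p hp
    obtain ⟨ε, hε, hball⟩ := Metric.mem_nhds_iff.1 (mem_interior_iff_mem_nhds.1 hp)
    have key : ∀ i : Fin 2, ∀ t : ℝ, |t| < ε → (p + EuclideanSpace.single i t) ∈ Rect A B C D := by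
      intro i t ht
      apply hball
      simp only [Metric.mem_ball, dist_eq_norm, add_sub_cancel_left]
      rwa [EuclideanSpace.norm_single]
    have h0a := key 0 (-(ε/2)) (by rw [abs_neg, abs_of_pos (by linarith)]; linarith)
    have h0b := key 0 (ε/2) (by rw [abs_of_pos (by linarith)]; linarith)
    have h1a := key 1 (-(ε/2)) (by rw [abs_neg, abs_of_pos (by linarith)]; linarith)
    have h1b := key 1 (ε/2) (by rw [abs_of_pos (by linarith)]; linarith)
    simp only [Rect, mem_setOf_eq, PiLp.add_apply, EuclideanSpace.single_apply] at h0a h0b h1a h1b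
    norm_num at h0a h0b h1a h1b
    constructor
    · constructor <;> [linarith [h0a.1.1]; linarith [h0b.1.2]]
    · constructor <;> [linarith [h1a.2.1]; linarith [h1b.2.2]]
  · have hopen : IsOpen {p : Plane | p 0 ∈ Ioo A B ∧ p 1 ∈ Ioo C D} := by
      have : {p : Plane | p 0 ∈ Ioo A B ∧ p 1 ∈ Ioo C D}
          = (fun p : Plane => p 0) ⁻¹' (Ioo A B) ∩ (fun p : Plane => p 1) ⁻¹' (Ioo C D) := rfl
      rw [this]
      exact ((isOpen_Ioo).preimage (continuous_coord 0)).inter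
        ((isOpen_Ioo).preimage (continuous_coord 1))
    apply interior_maximal _ hopen
    rintro p ⟨h0, h1⟩
    exact ⟨⟨h0.1.le, h0.2.le⟩, ⟨h1.1.le, h1.2.le⟩⟩

lemma convex_vert {P : Set Plane} (hP : Convex ℝ P) {x y₁ y₂ y : ℝ}
    (h1 : pt x y₁ ∈ P) (h2 : pt x y₂ ∈ P) (hy : y ∈ Icc y₁ y₂) : pt x y ∈ P := by
  rcases eq_or_lt_of_le (hy.1.trans hy.2 : y₁ ≤ y₂) with h | h
  · subst h
    have : y = y₁ := le_antisymm hy.2 hy.1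
    subst this; exact h1
  · set α := (y₂ - y) / (y₂ - y₁) with hα
    set β := (y - y₁) / (y₂ - y₁) with hβ
    have hΔ : y₂ - y₁ ≠ 0 := by linarith
    have hsum : α + β = 1 := by
      rw [hα, hβ, ← add_div]
      rw [show y₂ - y + (y - y₁) = y₂ - y₁ by ring, div_self hΔ]
    have hαn : 0 ≤ α := div_nonneg (by linarith [hy.2]) (by linarith)
    have hβn : 0 ≤ β := div_nonneg (by linarith [hy.1]) (by linarith)
    have := hP h1 h2 hαn hβn hsum
    convert this using 1
    ext i
    fin_cases i <;>
      simp only [PiLp.add_apply, PiLp.smul_apply, pt_zero, pt_one, smul_eq_mul] <;>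
      first
        | (show x = α * x + β * x; rw [← add_mul, hsum, one_mul])
        | (show y = α * y₁ + β * y₂; rw [hα, hβ]; field_simp [hΔ]; ring)

lemma escape_upleft (h : ℕ) (P₀ : Set Plane) (a b c d : Fin h → ℝ)
    (hconv : Convex ℝ P₀) (hclosed : IsClosed P₀) (hbdd : Bornology.IsBounded P₀)
    (hne : ∀ i, a i < b i ∧ c i < d i)
    (hdisj : Pairwise (Function.onFun Disjoint (fun i => Rect (a i) (b i) (c i) (d i))))
    (hsub : ∀ i, Rect (a i) (b i) (c i) (d i) ⊆ interior P₀) :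
    ∀ n : ℕ, ∀ p, p ∈ P₀ \ ⋃ i, interior (Rect (a i) (b i) (c i) (d i)) →
      (Finset.univ.filter (fun k => p 1 < d k)).card ≤ n →
      ∃ q ∈ frontier P₀, q 0 ≤ p 0 ∧ p 1 ≤ q 1 ∧
        ∃ γ : ℝ → Plane, IsPathIn (P₀ \ ⋃ i, interior (Rect (a i) (b i) (c i) (d i))) γ p q ∧
          pathLen γ ≤ ENNReal.ofReal ((q 1 - p 1) + (p 0 - q 0)) := by
  set P := P₀ \ ⋃ i, interior (Rect (a i) (b i) (c i) (d i)) with hPdef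
  have hnotint : ∀ p ∈ P, ∀ k, ¬(a k < p 0 ∧ p 0 < b k ∧ c k < p 1 ∧ p 1 < d k) := by
    rintro p ⟨hp₀, hpU⟩ k hk
    exact hpU (mem_iUnion.2 ⟨k, by rw [interior_Rect]; exact ⟨⟨hk.1, hk.2.1⟩, hk.2.2.1, hk.2.2.2⟩⟩)
  have edge_mem : ∀ i, ∀ q : Plane, q ∈ Rect (a i) (b i) (c i) (d i) →
      (q 0 = a i ∨ q 1 = c i ∨ q 1 = d i) → q ∈ P := by
    intro i q hq hedge
    refine ⟨interior_subset (hsub i hq), ?_⟩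
    intro hmem
    obtain ⟨k, hk⟩ := mem_iUnion.1 hmem
    rw [interior_Rect] at hk
    obtain ⟨⟨hk1, hk2⟩, hk3, hk4⟩ := hk
    by_cases hik : k = i
    · subst hik
      rcases hedge with e | e | e
      · rw [e] at hk1; exact lt_irrefl _ hk1
      · rw [e] at hk3; exact lt_irrefl _ hk3
      · rw [e] at hk4; exact lt_irrefl _ hk4
    · have hqk : q ∈ Rect (a k) (b k) (c k) (d k) :=
        ⟨⟨hk1.le, hk2.le⟩, hk3.le, hk4.le⟩
      exact Set.disjoint_left.1 (hdisj hik) hqk hq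
  have climb : ∀ p ∈ P, (∀ k, ¬(a k < p 0 ∧ p 0 < b k ∧ p 1 ≤ c k)) →
      ∃ q ∈ frontier P₀, q 0 = p 0 ∧ p 1 ≤ q 1 ∧
        ∃ γ, IsPathIn P γ p q ∧ pathLen γ ≤ ENNReal.ofReal (q 1 - p 1) := by
    intro p hpP hO
    have hp₀ : p ∈ P₀ := hpP.1
    set S := {t : ℝ | pt (p 0) t ∈ P₀} with hSdef
    have hpS : p 1 ∈ S := by rw [hSdef, mem_setOf_eq, pt_eta]; exact hp₀
    obtain ⟨r, hr⟩ := (Metric.isBounded_iff_subset_closedBall 0).1 hbdd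
    have hSbdd : BddAbove S := ⟨r, fun t ht => by
      calc t ≤ |t| := le_abs_self t
        _ ≤ ‖pt (p 0) t‖ := abs_snd_le_norm _ _
        _ ≤ r := by rw [← mem_closedBall_zero_iff]; exact hr ht⟩
    have hSclosed : IsClosed S := hclosed.preimage (continuous_pt_snd (p 0))
    set T := sSup S with hTdef
    have hTS : T ∈ S := hSclosed.csSup_mem ⟨_, hpS⟩ hSbdd
    have hpT : p 1 ≤ T := le_csSup hSbdd hpS
    set q := pt (p 0) T with hqdef
    have hqP₀ : q ∈ P₀ := hTS
    have hqnotint : q ∉ interior P₀ := by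
      intro hmem
      obtain ⟨ε, hε, hball⟩ := Metric.mem_nhds_iff.1 (mem_interior_iff_mem_nhds.1 hmem)
      have hin : pt (p 0) (T + ε/2) ∈ P₀ := by
        apply hball
        rw [mem_ball, hqdef, dist_pt_vert,
          show T + ε/2 - T = ε/2 by ring, abs_of_pos (by linarith)]
        linarith
      have : T + ε/2 ≤ T := le_csSup hSbdd hin
      linarith
    have hqf : q ∈ frontier P₀ := by
      rw [hclosed.frontier_eq]; exact ⟨hqP₀, hqnotint⟩
    have hmem : ∀ yy ∈ Icc (p 1) T, pt (p 0) yy ∈ P := by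
      intro yy hyy
      refine ⟨convex_vert hconv (by rw [pt_eta]; exact hp₀) hqP₀ hyy, ?_⟩
      intro hint
      obtain ⟨k, hk⟩ := mem_iUnion.1 hint
      rw [interior_Rect] at hk
      simp only [mem_setOf_eq, pt_zero, pt_one] at hk
      have h2 := hO k
      have hck : c k < p 1 := by
        by_contra hcc
        exact h2 ⟨hk.1.1, hk.1.2, le_of_not_gt hcc⟩
      have := hnotint p hpP k
      exact this ⟨hk.1.1, hk.1.2, hck, lt_of_le_of_lt hyy.1 hk.2.2⟩
    have hseg_eq : ∀ t : ℝ, seg p q t = pt (p 0) (p 1 + t * (T - p 1)) := by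
      intro t
      rw [seg_apply]
      congr 1 <;> simp [hqdef]
    have hmaps : MapsTo (seg p q) (Icc 0 1) P := by
      intro t ht
      rw [hseg_eq t]
      exact hmem _ ⟨by nlinarith [ht.1, ht.2], by nlinarith [ht.1, ht.2]⟩
    refine ⟨q, hqf, by rw [hqdef]; simp, by rw [hqdef]; simpa using hpT, seg p q,
      seg_isPathIn hmaps, ?_⟩
    refine (pathLen_seg p q).trans (le_of_eq ?_)
    congr 1
    rw [show dist p q = dist (pt (p 0) (p 1)) q by rw [pt_eta], hqdef, dist_pt_vert,
      abs_sub_comm, abs_of_nonneg (by linarith)]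
    simp
  intro n
  induction n with
  | zero =>
    intro p hp hcard
    have hO : ∀ k, ¬(a k < p 0 ∧ p 0 < b k ∧ p 1 ≤ c k) := by
      intro k hk
      have hkmem : k ∈ Finset.univ.filter (fun k => p 1 < d k) :=
        Finset.mem_filter.2 ⟨Finset.mem_univ _, lt_of_le_of_lt hk.2.2 (hne k).2⟩
      have := Finset.card_pos.2 ⟨k, hkmem⟩
      omega
    obtain ⟨q, hqf, hq0, hq1, γ, hγ, hlen⟩ := climb p hp hO
    exact ⟨q, hqf, le_of_eq hq0, hq1, γ, hγ,
      hlen.trans (ofReal_le_ofReal (by rw [hq0]; linarith))⟩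
  | succ n ih =>
    intro p hp hcard
    by_cases hO : ∀ k, ¬(a k < p 0 ∧ p 0 < b k ∧ p 1 ≤ c k)
    · obtain ⟨q, hqf, hq0, hq1, γ, hγ, hlen⟩ := climb p hp hO
      exact ⟨q, hqf, le_of_eq hq0, hq1, γ, hγ,
        hlen.trans (ofReal_le_ofReal (by rw [hq0]; linarith))⟩
    · push_neg at hO
      obtain ⟨k₀, hk₀⟩ := hO
      set O := Finset.univ.filter (fun k => a k < p 0 ∧ p 0 < b k ∧ p 1 ≤ c k) with hOdef
      obtain ⟨i, hiO, himin⟩ := O.exists_min_image c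
        ⟨k₀, Finset.mem_filter.2 ⟨Finset.mem_univ _, hk₀⟩⟩
      rw [hOdef, Finset.mem_filter] at hiO
      obtain ⟨-, hia, hib, hic⟩ := hiO
      set π₁ := pt (p 0) (c i) with hπ₁def
      set π₂ := pt (a i) (c i) with hπ₂def
      set π₃ := pt (a i) (d i) with hπ₃def
      have hπ₁R : π₁ ∈ Rect (a i) (b i) (c i) (d i) :=
        ⟨⟨hia.le, hib.le⟩, le_refl _, (hne i).2.le⟩
      have hm₁ : MapsTo (seg p π₁) (Icc 0 1) P := by
        intro t ht
        have heq : seg p π₁ t = pt (p 0) (p 1 + t * (c i - p 1)) := by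
          rw [seg_apply]; congr 1 <;> simp [hπ₁def]
        rw [heq]
        have hyIcc : p 1 ≤ p 1 + t * (c i - p 1) ∧ p 1 + t * (c i - p 1) ≤ c i :=
          ⟨by nlinarith [ht.1, ht.2], by nlinarith [ht.1, ht.2]⟩
        refine ⟨convex_vert hconv (by rw [pt_eta]; exact hp.1)
          (interior_subset (hsub i hπ₁R)) ⟨hyIcc.1, hyIcc.2⟩, ?_⟩
        intro hint
        obtain ⟨j, hj⟩ := mem_iUnion.1 hint
        rw [interior_Rect] at hj
        simp only [mem_setOf_eq, pt_zero, pt_one] at hj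
        have hpj : p 1 ≤ c j := by
          by_contra hcc
          exact hnotint p hp j ⟨hj.1.1, hj.1.2, lt_of_not_ge hcc,
            lt_of_le_of_lt hyIcc.1 hj.2.2⟩
        have hjO : j ∈ O := Finset.mem_filter.2 ⟨Finset.mem_univ _, hj.1.1, hj.1.2, hpj⟩
        have := himin j hjO
        linarith [hj.2.1, hyIcc.2]
      have hm₂ : MapsTo (seg π₁ π₂) (Icc 0 1) P := by
        intro t ht
        have heq : seg π₁ π₂ t = pt (p 0 + t * (a i - p 0)) (c i) := by
          rw [seg_apply]; congr 1 <;> simp [hπ₁def, hπ₂def]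
        rw [heq]
        refine edge_mem i _ ⟨⟨?_, ?_⟩, le_refl _, (hne i).2.le⟩ (Or.inr (Or.inl rfl))
        · simp only [pt_zero]; nlinarith [ht.1, ht.2]
        · simp only [pt_zero]; nlinarith [ht.1, ht.2]
      have hm₃ : MapsTo (seg π₂ π₃) (Icc 0 1) P := by
        intro t ht
        have heq : seg π₂ π₃ t = pt (a i) (c i + t * (d i - c i)) := by
          rw [seg_apply]; congr 1 <;> simp [hπ₂def, hπ₃def]
        rw [heq]
        have h1 := (hne i).2
        refine edge_mem i _ ⟨⟨le_refl _, (hne i).1.le⟩, ?_, ?_⟩ (Or.inl rfl)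
        · simp only [pt_one]; nlinarith [ht.1, ht.2]
        · simp only [pt_one]; nlinarith [ht.1, ht.2]
      have hπ₃P : π₃ ∈ P :=
        edge_mem i π₃ ⟨⟨le_refl _, (hne i).1.le⟩, (hne i).2.le, le_refl _⟩ (Or.inl rfl)
      have hcard' : (Finset.univ.filter (fun k => π₃ 1 < d k)).card ≤ n := by
        have hsubset : Finset.univ.filter (fun k => π₃ 1 < d k) ⊆
            (Finset.univ.filter (fun k => p 1 < d k)).erase i := by
          intro j hj
          rw [Finset.mem_filter] at hj
          have hdj : d i < d j := by
            have := hj.2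
            rwa [hπ₃def, pt_one] at this
          refine Finset.mem_erase.2 ⟨?_,
            Finset.mem_filter.2 ⟨Finset.mem_univ _, by linarith [hic, (hne i).2]⟩⟩
          rintro rfl; exact lt_irrefl _ hdj
        have hiF : i ∈ Finset.univ.filter (fun k => p 1 < d k) :=
          Finset.mem_filter.2 ⟨Finset.mem_univ _, by linarith [(hne i).2]⟩
        have h1 := Finset.card_le_card hsubset
        rw [Finset.card_erase_of_mem hiF] at h1
        omega
      obtain ⟨q, hqf, hq0, hq1, γ', hγ', hlen'⟩ := ih π₃ hπ₃P hcard'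
      obtain ⟨γa, hγa, hlena⟩ := path_join (seg_isPathIn hm₁) (seg_isPathIn hm₂)
      obtain ⟨γb, hγb, hlenb⟩ := path_join hγa (seg_isPathIn hm₃)
      obtain ⟨γc, hγc, hlenc⟩ := path_join hγb hγ'
      have hq0' : q 0 ≤ a i := by rw [hπ₃def, pt_zero] at hq0; exact hq0
      have hq1' : d i ≤ q 1 := by rw [hπ₃def, pt_one] at hq1; exact hq1
      refine ⟨q, hqf, by linarith, by linarith [hic, (hne i).2], γc, hγc, ?_⟩
      have d1 : dist p π₁ = c i - p 1 := by
        rw [show dist p π₁ = dist (pt (p 0) (p 1)) π₁ by rw [pt_eta], hπ₁def, dist_pt_vert,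
          abs_sub_comm, abs_of_nonneg (by linarith)]
      have d2 : dist π₁ π₂ = p 0 - a i := by
        rw [hπ₁def, hπ₂def, dist_pt_horiz, abs_of_nonneg (by linarith)]
      have d3 : dist π₂ π₃ = d i - c i := by
        rw [hπ₂def, hπ₃def, dist_pt_vert, abs_sub_comm, abs_of_nonneg (by linarith [(hne i).2])]
      have hlen'2 : pathLen γ' ≤ ENNReal.ofReal ((q 1 - d i) + (a i - q 0)) := by
        refine hlen'.trans (le_of_eq ?_)
        rw [hπ₃def, pt_zero, pt_one]
      calc pathLen γc ≤ (pathLen γa + pathLen (seg π₂ π₃)) + pathLen γ' :=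
            hlenc.trans (add_le_add_left hlenb _)
        _ ≤ ((pathLen (seg p π₁) + pathLen (seg π₁ π₂)) + pathLen (seg π₂ π₃)) + pathLen γ' :=
            add_le_add_left (add_le_add_left hlena _) _
        _ ≤ ((ENNReal.ofReal (c i - p 1) + ENNReal.ofReal (p 0 - a i)) +
              ENNReal.ofReal (d i - c i)) + ENNReal.ofReal ((q 1 - d i) + (a i - q 0)) := by
            refine add_le_add (add_le_add (add_le_add ?_ ?_) ?_) hlen'2
            · exact (pathLen_seg _ _).trans (le_of_eq (by rw [d1]))
            · exact (pathLen_seg _ _).trans (le_of_eq (by rw [d2]))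
            · exact (pathLen_seg _ _).trans (le_of_eq (by rw [d3]))
        _ = ENNReal.ofReal ((c i - p 1) + (p 0 - a i) + (d i - c i) +
              ((q 1 - d i) + (a i - q 0))) := by
            rw [← ENNReal.ofReal_add (by linarith) (by linarith),
              ← ENNReal.ofReal_add (by linarith) (by linarith [(hne i).2]),
              ← ENNReal.ofReal_add (by linarith [(hne i).2]) (by linarith)]
        _ ≤ ENNReal.ofReal ((q 1 - p 1) + (p 0 - q 0)) := ofReal_le_ofReal (by linarith)


lemma eVariationOn_neg (γ : ℝ → Plane) (s : Set ℝ) :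
    eVariationOn (fun t => -(γ t)) s = eVariationOn γ s := by
  simp [eVariationOn, edist_neg_neg]

lemma interior_preimage_neg (s : Set Plane) :
    interior (Neg.neg ⁻¹' s) = Neg.neg ⁻¹' (interior s) := by
  have := (Homeomorph.neg Plane).preimage_interior s
  simpa using this.symm

lemma frontier_preimage_neg (s : Set Plane) :
    frontier (Neg.neg ⁻¹' s) = Neg.neg ⁻¹' (frontier s) := by
  have := (Homeomorph.neg Plane).preimage_frontier s
  simpa using this.symm

lemma escape_downright (h : ℕ) (P₀ : Set Plane) (a b c d : Fin h → ℝ)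
    (hconv : Convex ℝ P₀) (hclosed : IsClosed P₀) (hbdd : Bornology.IsBounded P₀)
    (hne : ∀ i, a i < b i ∧ c i < d i)
    (hdisj : Pairwise (Function.onFun Disjoint (fun i => Rect (a i) (b i) (c i) (d i))))
    (hsub : ∀ i, Rect (a i) (b i) (c i) (d i) ⊆ interior P₀) :
    ∀ p, p ∈ P₀ \ ⋃ i, interior (Rect (a i) (b i) (c i) (d i)) →
      ∃ q ∈ frontier P₀, p 0 ≤ q 0 ∧ q 1 ≤ p 1 ∧
        ∃ γ : ℝ → Plane, IsPathIn (P₀ \ ⋃ i, interior (Rect (a i) (b i) (c i) (d i))) γ p q ∧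
          pathLen γ ≤ ENNReal.ofReal ((p 1 - q 1) + (q 0 - p 0)) := by
  intro p hp
  -- reflected data
  have hRect : ∀ i, Rect (-(b i)) (-(a i)) (-(d i)) (-(c i))
      = Neg.neg ⁻¹' (Rect (a i) (b i) (c i) (d i)) := by
    intro i
    ext x
    have hx0 : (-x) 0 = -(x 0) := rfl
    have hx1 : (-x) 1 = -(x 1) := rfl
    simp only [Rect, mem_setOf_eq, mem_preimage, mem_Icc, hx0, hx1]
    constructor
    · rintro ⟨⟨h1, h2⟩, h3, h4⟩
      exact ⟨⟨by linarith, by linarith⟩, by linarith, by linarith⟩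
    · rintro ⟨⟨h1, h2⟩, h3, h4⟩
      exact ⟨⟨by linarith, by linarith⟩, by linarith, by linarith⟩
  have hnegP : -P₀ = Neg.neg ⁻¹' P₀ := rfl
  have hint : ∀ i, interior (Rect (-(b i)) (-(a i)) (-(d i)) (-(c i)))
      = Neg.neg ⁻¹' interior (Rect (a i) (b i) (c i) (d i)) := by
    intro i
    rw [hRect i, interior_preimage_neg]
  have hne' : ∀ i, -(b i) < -(a i) ∧ -(d i) < -(c i) := fun i =>
    ⟨neg_lt_neg (hne i).1, neg_lt_neg (hne i).2⟩
  have hdisj' : Pairwise (Function.onFun Disjoint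
      (fun i => Rect (-(b i)) (-(a i)) (-(d i)) (-(c i)))) := by
    intro i j hij
    rw [Function.onFun, hRect i, hRect j]
    exact Disjoint.preimage _ (hdisj hij)
  have hsub' : ∀ i, Rect (-(b i)) (-(a i)) (-(d i)) (-(c i)) ⊆ interior (-P₀) := by
    intro i
    rw [hRect i, hnegP, interior_preimage_neg]
    exact fun x hx => hsub i hx
  have hpP' : -p ∈ (-P₀) \ ⋃ i, interior (Rect (-(b i)) (-(a i)) (-(d i)) (-(c i))) := by
    constructor
    · rw [hnegP]; simpa using hp.1
    · intro hmem
      obtain ⟨k, hk⟩ := mem_iUnion.1 hmem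
      rw [hint k] at hk
      exact hp.2 (mem_iUnion.2 ⟨k, by simpa using hk⟩)
  obtain ⟨q', hq'f, hq'0, hq'1, γ', hγ', hlen'⟩ :=
    escape_upleft h (-P₀) (fun i => -(b i)) (fun i => -(a i)) (fun i => -(d i)) (fun i => -(c i))
      hconv.neg hclosed.neg hbdd.neg hne' hdisj' hsub'
      ((Finset.univ.filter (fun k => (-p) 1 < -(c k))).card) (-p) hpP' le_rfl
  obtain ⟨hcont', he'0, he'1, hmaps'⟩ := hγ'
  refine ⟨-q', ?_, ?_, ?_, (fun t => -(γ' t)), ⟨hcont'.neg, ?_, ?_, ?_⟩, ?_⟩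
  · have hfr : frontier (-P₀) = Neg.neg ⁻¹' frontier P₀ := by
      rw [hnegP, frontier_preimage_neg]
    rw [hfr] at hq'f
    simpa using hq'f
  · have : q' 0 ≤ -(p 0) := hq'0
    have h2 : (-q') 0 = -(q' 0) := rfl
    rw [h2]; linarith
  · have : -(p 1) ≤ q' 1 := hq'1
    have h2 : (-q') 1 = -(q' 1) := rfl
    rw [h2]; linarith
  · show -(γ' 0) = p
    rw [he'0]; simp
  · show -(γ' 1) = -q'
    rw [he'1]
  · intro t ht
    have hm := hmaps' ht
    constructor
    · have h1 : γ' t ∈ -P₀ := hm.1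
      rw [hnegP] at h1
      simpa using h1
    · intro hmem
      obtain ⟨k, hk⟩ := mem_iUnion.1 hmem
      refine hm.2 (mem_iUnion.2 ⟨k, ?_⟩)
      rw [hint k]
      simpa using hk
  · rw [show pathLen (fun t => -(γ' t)) = pathLen γ' from eVariationOn_neg γ' _]
    refine hlen'.trans (le_of_eq ?_)
    have e0 : q' 0 = -((-q') 0) := by simp
    have e1 : q' 1 = -((-q') 1) := by simp
    have f0 : (-p) 0 = -(p 0) := rfl
    have f1 : (-p) 1 = -(p 1) := rfl
    rw [f0, f1, e0, e1]
    ring_nf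
/-- Let `P = P₀ \ ⋃ᵢ interior Pᵢ`, where `P₀` is a convex polygon and each
hole `Pᵢ` is a closed axis-aligned rectangle `[aᵢ,bᵢ] × [cᵢ,dᵢ]` with nonempty interior, the
rectangles being pairwise disjoint and contained in the interior of `P₀`. Then from every
`s ∈ P` there is a continuous path in `P` to `frontier P₀` of length at most `diam₂(P)`. -/
theorem escape_path_axis_aligned
    (h : ℕ) (P₀ : Set Plane) (Q : Fin h → Set Plane)
    (a b c d : Fin h → ℝ)
    (hP₀ : IsConvexPolygon P₀)
    (hrect : ∀ i, Q i = {p : Plane | p 0 ∈ Set.Icc (a i) (b i) ∧ p 1 ∈ Set.Icc (c i) (d i)})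
    (hne : ∀ i, a i < b i ∧ c i < d i)
    (hdisj : Pairwise (Function.onFun Disjoint Q))
    (hsub : ∀ i, Q i ⊆ interior P₀) :
    ∀ s ∈ (P₀ \ ⋃ i, interior (Q i)),
      ∃ γ : ℝ → Plane,
        ContinuousOn γ (Set.Icc 0 1) ∧ γ 0 = s ∧ γ 1 ∈ frontier P₀ ∧
        Set.MapsTo γ (Set.Icc 0 1) (P₀ \ ⋃ i, interior (Q i)) ∧
        pathLen γ ≤ ENNReal.ofReal (Metric.diam (P₀ \ ⋃ i, interior (Q i))) := by
  obtain ⟨S, hSne, hSeq⟩ := hP₀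
  have hcomp : IsCompact P₀ := hSeq ▸ S.finite_toSet.isCompact_convexHull (𝕜 := ℝ)
  have hclosed : IsClosed P₀ := hcomp.isClosed
  have hbdd : Bornology.IsBounded P₀ := hcomp.isBounded
  have hconv : Convex ℝ P₀ := hSeq ▸ convex_convexHull ℝ _
  have hQR : ∀ i, Q i = Rect (a i) (b i) (c i) (d i) := hrect
  have hdisj' : Pairwise (Function.onFun Disjoint
      (fun i => Rect (a i) (b i) (c i) (d i))) := by
    intro i j hij
    have := hdisj hij
    rwa [Function.onFun, hQR i, hQR j] at this
  have hsub' : ∀ i, Rect (a i) (b i) (c i) (d i) ⊆ interior P₀ := fun i => (hQR i) ▸ hsub i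
  have hPeq : (P₀ \ ⋃ i, interior (Q i))
      = (P₀ \ ⋃ i, interior (Rect (a i) (b i) (c i) (d i))) := by
    congr 1
    exact iUnion_congr fun i => by rw [hQR i]
  rw [hPeq]
  intro s hs
  obtain ⟨q₁, hq₁f, hq₁0, hq₁1, γ₁, hγ₁, hl₁⟩ :=
    escape_upleft h P₀ a b c d hconv hclosed hbdd hne hdisj' hsub' _ s hs le_rfl
  obtain ⟨q₂, hq₂f, hq₂0, hq₂1, γ₂, hγ₂, hl₂⟩ :=
    escape_downright h P₀ a b c d hconv hclosed hbdd hne hdisj' hsub' s hs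
  have hfr_sub : frontier P₀ ⊆ P₀ \ ⋃ i, interior (Rect (a i) (b i) (c i) (d i)) := by
    intro x hx
    refine ⟨hclosed.frontier_subset hx, ?_⟩
    intro hmem
    obtain ⟨k, hk⟩ := mem_iUnion.1 hmem
    have hxint : x ∈ interior P₀ := hsub' k (interior_subset hk)
    rw [hclosed.frontier_eq] at hx
    exact hx.2 hxint
  have hq₁P := hfr_sub hq₁f
  have hq₂P := hfr_sub hq₂f
  have hPbdd : Bornology.IsBounded (P₀ \ ⋃ i, interior (Rect (a i) (b i) (c i) (d i))) :=
    hbdd.subset diff_subset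
  have hdist : dist q₁ q₂ ≤ diam (P₀ \ ⋃ i, interior (Rect (a i) (b i) (c i) (d i))) :=
    dist_le_diam_of_mem hPbdd hq₁P hq₂P
  set D := diam (P₀ \ ⋃ i, interior (Rect (a i) (b i) (c i) (d i))) with hD
  have hdiam0 : 0 ≤ D := diam_nonneg
  set A := (q₁ 1 - s 1) + (s 0 - q₁ 0) with hA
  set B := (s 1 - q₂ 1) + (q₂ 0 - s 0) with hB
  have hkey : A + B ≤ 2 * D := by
    have hd : dist q₁ q₂ = Real.sqrt ((q₁ 0 - q₂ 0)^2 + (q₁ 1 - q₂ 1)^2) := by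
      rw [show dist q₁ q₂ = dist (pt (q₁ 0) (q₁ 1)) (pt (q₂ 0) (q₂ 1)) by rw [pt_eta, pt_eta],
        dist_pt]
    have habs : |q₁ 0 - q₂ 0| + |q₁ 1 - q₂ 1| ≤ Real.sqrt 2 * dist q₁ q₂ := by
      rw [hd, ← Real.sqrt_mul (by norm_num : (0:ℝ) ≤ 2),
        Real.le_sqrt (by positivity) (by positivity)]
      nlinarith [sq_nonneg (|q₁ 0 - q₂ 0| - |q₁ 1 - q₂ 1|), sq_abs (q₁ 0 - q₂ 0),
        sq_abs (q₁ 1 - q₂ 1)]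
    have hsqrt2 : Real.sqrt 2 ≤ 2 := by
      nlinarith [Real.sq_sqrt (by norm_num : (0:ℝ) ≤ 2), Real.sqrt_nonneg 2]
    have h1 : A + B ≤ |q₁ 1 - q₂ 1| + |q₁ 0 - q₂ 0| := by
      have e1 := le_abs_self (q₁ 1 - q₂ 1)
      have e2 := le_abs_self (q₂ 0 - q₁ 0)
      have e3 : |q₂ 0 - q₁ 0| = |q₁ 0 - q₂ 0| := abs_sub_comm _ _
      rw [hA, hB]
      linarith
    have h2 : Real.sqrt 2 * dist q₁ q₂ ≤ 2 * D := by
      have := mul_le_mul hsqrt2 hdist dist_nonneg (by norm_num : (0:ℝ) ≤ 2)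
      linarith
    linarith
  obtain ⟨hc₁, h0₁, h1₁, hm₁⟩ := hγ₁
  obtain ⟨hc₂, h0₂, h1₂, hm₂⟩ := hγ₂
  by_cases hAB : A ≤ B
  · refine ⟨γ₁, hc₁, h0₁, by rw [h1₁]; exact hq₁f, hm₁, ?_⟩
    exact hl₁.trans (ofReal_le_ofReal (by rw [hA] at hAB hkey ⊢; linarith))
  · refine ⟨γ₂, hc₂, h0₂, by rw [h1₂]; exact hq₂f, hm₂, ?_⟩
    exact hl₂.trans (ofReal_le_ofReal (by rw [hB] at hAB hkey ⊢; linarith))
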